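/- Assume n ≥ 2 and w_1 ≤ w_2 ≤ … ≤ w_n. If u ∈ (ℤ_{≥0})^n is a w-bubble, then u_i ≤ w_n − 2 for every i ∈ {1, …, n−1}, and u_n ≤ w_{n−1} − 2. -/

import Mathlib

/-- The weighted dot product `w · u = ∑ i, w i * u i`. -/
def dotW {n : ℕ} (w u : Fin n → ℕ) : ℕ := ∑ i, w i * u i

/-- `d_w`, the least common multiple of the weights. -/
def lcmW {n : ℕ} (w : Fin n → ℕ) : ℕ := Finset.univ.lcm w

/-- `u` is a `w`-bubble: `w · u ≥ 2 d_w` and there is no `v ⪯ u` with `w · v = d_w`. -/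
def IsBubble {n : ℕ} (w u : Fin n → ℕ) : Prop :=
  2 * lcmW w ≤ dotW w u ∧
    ¬ ∃ v : Fin n → ℕ, (∀ i, v i ≤ u i) ∧ dotW w v = lcmW w

lemma blockaux (s : ℕ) (T : Multiset ℕ) (l : List ℕ) (hlist : (l : Multiset ℕ) = T)
    (hlen : s ≤ l.length) (a b : ℕ) (hb : b ≤ s) (hlt : a < b)
    (hfab : ((l.take a).sum : ZMod s) = ((l.take b).sum : ZMod s)) :
    ∃ B : Multiset ℕ, B ≤ T ∧ 0 < Multiset.card B ∧ Multiset.card B ≤ s ∧ s ∣ B.sum := by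
  refine ⟨(((l.take b).drop a : List ℕ) : Multiset ℕ), ?_, ?_, ?_, ?_⟩
  · rw [← hlist]
    exact Multiset.coe_le.mpr (((l.take b).drop_sublist a).trans (l.take_sublist b)).subperm
  · have : ((l.take b).drop a).length = b - a := by
      rw [List.length_drop, List.length_take]
      omega
    simp only [Multiset.coe_card, this]
    omega
  · have : ((l.take b).drop a).length = b - a := by
      rw [List.length_drop, List.length_take]
      omega
    simp only [Multiset.coe_card, this]
    omega
  · have hsplit : (l.take b).take a ++ (l.take b).drop a = l.take b := List.take_append_drop _ _
    have htt : (l.take b).take a = l.take a := by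
      rw [List.take_take]
      congr 1
      omega
    have hsum : (l.take a).sum + ((l.take b).drop a).sum = (l.take b).sum := by
      rw [← htt, ← List.sum_append, hsplit]
    have hcast : ((l.take a).sum : ZMod s) + (((l.take b).drop a).sum : ZMod s)
        = ((l.take b).sum : ZMod s) := by
      exact_mod_cast congrArg (fun x : ℕ => (x : ZMod s)) hsum
    rw [hfab] at hcast
    have hz : ((((l.take b).drop a).sum : ℕ) : ZMod s) = 0 := add_eq_left.mp hcast
    exact (ZMod.natCast_eq_zero_iff _ _).mp hz

/-- Any multiset of at least `s ≥ 1` naturals contains a nonempty submultiset of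
size at most `s` whose sum is divisible by `s`. -/
lemma exists_block (s : ℕ) (hs : 0 < s) (T : Multiset ℕ) (hT : s ≤ Multiset.card T) :
    ∃ B : Multiset ℕ, B ≤ T ∧ 0 < Multiset.card B ∧ Multiset.card B ≤ s ∧ s ∣ B.sum := by
  haveI : NeZero s := ⟨hs.ne'⟩
  set l := T.toList with hl
  have hlist : (l : Multiset ℕ) = T := T.coe_toList
  have hlen : s ≤ l.length := by
    rw [Multiset.length_toList]; exact hT
  have hcard : Fintype.card (ZMod s) < Fintype.card (Fin (s + 1)) := by
    simp [ZMod.card s]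
  obtain ⟨a, b, hab, hfab⟩ :=
    Fintype.exists_ne_map_eq_of_card_lt
      (fun k : Fin (s + 1) => (((l.take (k : ℕ)).sum : ℕ) : ZMod s)) hcard
  rcases lt_or_gt_of_ne (fun h : (a : ℕ) = (b : ℕ) => hab (Fin.ext h)) with hlt | hlt
  · exact blockaux s T l hlist hlen a b (by omega) hlt hfab
  · exact blockaux s T l hlist hlen b a (by omega) hlt hfab.symm

/-- Core representability lemma: coins from `T` (all of value at most `q+1`)
together with `q` coins of value `s` can make exactly `s * D`. -/
lemma core (s q : ℕ) (hs : 0 < s) :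
    ∀ (m : ℕ) (T : Multiset ℕ), Multiset.card T ≤ m →
      (∀ c ∈ T, 0 < c ∧ c ≤ q + 1) → ∀ D : ℕ,
      s * D + s * (q + 1) ≤ T.sum + s * q + (q + 1) →
      ∃ N, N ≤ T ∧ ∃ a, a ≤ q ∧ N.sum + s * a = s * D := by
  intro m
  induction m with
  | zero =>
    intro T hcard _ D hineq
    have hT0 : T = 0 := by
      rw [← Multiset.card_eq_zero]; omega
    subst hT0
    simp only [Multiset.sum_zero, zero_add] at hineq
    have hD : D ≤ q := by
      have e1 : s * (q + 1) = s * q + s := by ring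
      have e2 : D ≤ s * D := Nat.le_mul_of_pos_left D hs
      omega
    exact ⟨0, le_refl 0, D, hD, by simp⟩
  | succ m ih =>
    intro T hcard hpos D hineq
    by_cases hsmall : Multiset.card T < s
    · -- fewer than s coins: all of T is waste, pay with s-coins only
      have hsum : T.sum ≤ Multiset.card T * (q + 1) := by
        have := Multiset.sum_le_card_nsmul T (q + 1) (fun x hx => (hpos x hx).2)
        simpa [smul_eq_mul] using this
      have hD : D ≤ q := by
        have h1 : Multiset.card T * (q + 1) + (q + 1) ≤ s * (q + 1) := by
          have : Multiset.card T + 1 ≤ s := hsmall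
          calc Multiset.card T * (q + 1) + (q + 1) = (Multiset.card T + 1) * (q + 1) := by ring
            _ ≤ s * (q + 1) := Nat.mul_le_mul_right _ this
        have h2 : s * D + s * (q + 1) ≤ s * (q + 1) + s * q := by omega
        have h3 : s * D ≤ s * q := by omega
        exact Nat.le_of_mul_le_mul_left h3 hs
      exact ⟨0, Multiset.zero_le T, D, hD, by simp⟩
    · push_neg at hsmall
      obtain ⟨B, hBT, hBpos, hBcard, β, hβ⟩ := exists_block s hs T hsmall
      have hBsumpos : 0 < B.sum := by
        obtain ⟨x, hx⟩ := Multiset.card_pos_iff_exists_mem.mp hBpos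
        have hx0 : 0 < x := (hpos x (Multiset.mem_of_le hBT hx)).1
        have := Multiset.single_le_sum (fun y _ => Nat.zero_le y) x hx
        omega
      have hβpos : 0 < β := by
        rcases Nat.eq_zero_or_pos β with h | h
        · rw [h, Nat.mul_zero] at hβ; omega
        · exact h
      have hβle : β ≤ q + 1 := by
        have hsumle : B.sum ≤ Multiset.card B * (q + 1) := by
          have := Multiset.sum_le_card_nsmul B (q + 1)
            (fun x hx => (hpos x (Multiset.mem_of_le hBT hx)).2)
          simpa [smul_eq_mul] using this
        have : s * β ≤ s * (q + 1) := by
          calc s * β = B.sum := hβ.symm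
            _ ≤ Multiset.card B * (q + 1) := hsumle
            _ ≤ s * (q + 1) := Nat.mul_le_mul_right _ hBcard
        exact Nat.le_of_mul_le_mul_left this hs
      rcases le_or_gt β D with hβD | hβD
      · -- use the block, recurse
        have hTB : T - B + B = T := tsub_add_cancel_of_le hBT
        have hcard' : Multiset.card (T - B) ≤ m := by
          have := congrArg Multiset.card hTB
          rw [Multiset.card_add] at this
          omega
        have hpos' : ∀ c ∈ T - B, 0 < c ∧ c ≤ q + 1 := fun c hc =>
          hpos c (Multiset.mem_of_le (Multiset.sub_le_self T B) hc)
        have hsumTB : (T - B).sum + B.sum = T.sum := by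
          conv_rhs => rw [← hTB]
          rw [Multiset.sum_add]
        have hmulsplit : s * (D - β) + s * β = s * D := by
          rw [← Nat.mul_add]
          congr 1
          omega
        have hineq' : s * (D - β) + s * (q + 1) ≤ (T - B).sum + s * q + (q + 1) := by
          omega
        obtain ⟨N', hN'le, a, ha, hNsum⟩ := ih (T - B) hcard' hpos' (D - β) hineq'
        refine ⟨N' + B, ?_, a, ha, ?_⟩
        · calc N' + B ≤ (T - B) + B := add_le_add_left hN'le B
            _ = T := hTB
        · rw [Multiset.sum_add]
          omega
      · -- block is bigger than target: pay with s-coins only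
        have hD : D ≤ q := by omega
        exact ⟨0, Multiset.zero_le T, D, hD, by simp⟩

/-- Splitting a submultiset of a sum. -/
lemma multiset_split (N A B : Multiset ℕ) (h : N ≤ A + B) :
    ∃ N₁ N₂ : Multiset ℕ, N₁ ≤ A ∧ N₂ ≤ B ∧ N = N₁ + N₂ := by
  refine ⟨N - (N - A), N - A, ?_, ?_, ?_⟩
  · rw [Multiset.le_iff_count]
    intro x
    rw [Multiset.count_sub, Multiset.count_sub]
    omega
  · rw [tsub_le_iff_right]
    rwa [add_comm]
  · exact (tsub_add_cancel_of_le (Multiset.sub_le_self N A)).symm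

lemma unpack {n : ℕ} (w u : Fin n → ℕ) :
    ∀ (F : Finset (Fin n)) (N : Multiset ℕ),
      N ≤ ∑ k ∈ F, Multiset.replicate (u k) (w k) →
      ∃ v : Fin n → ℕ, (∀ k, v k ≤ u k) ∧ ∑ k ∈ F, w k * v k = N.sum := by
  intro F
  induction F using Finset.induction with
  | empty =>
    intro N hN
    simp only [Finset.sum_empty] at hN
    have : N = 0 := Multiset.le_zero.mp hN
    exact ⟨fun _ => 0, fun k => Nat.zero_le _, by simp [this]⟩
  | @insert k F hk ihF =>
    intro N hN
    rw [Finset.sum_insert hk] at hN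
    obtain ⟨N₁, N₂, hN₁, hN₂, hNsplit⟩ := multiset_split N _ _ hN
    obtain ⟨v, hv, hvsum⟩ := ihF N₂ hN₂
    have hall : ∀ x ∈ N₁, x = w k := fun x hx =>
      Multiset.eq_of_mem_replicate (Multiset.mem_of_le hN₁ hx)
    have hN₁eq : N₁ = Multiset.replicate (Multiset.card N₁) (w k) :=
      Multiset.eq_replicate_card.mpr hall
    have hmle : Multiset.card N₁ ≤ u k := by
      have := Multiset.card_le_card hN₁
      simpa using this
    refine ⟨Function.update v k (Multiset.card N₁), ?_, ?_⟩
    · intro j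
      by_cases hj : j = k
      · subst hj; simp [Function.update_self, hmle]
      · simp [Function.update_of_ne hj, hv j]
    · rw [Finset.sum_insert hk, Function.update_self]
      have hrest : ∑ j ∈ F, w j * Function.update v k (Multiset.card N₁) j
          = ∑ j ∈ F, w j * v j := by
        apply Finset.sum_congr rfl
        intro j hj
        have : j ≠ k := fun h => hk (h ▸ hj)
        rw [Function.update_of_ne this]
      rw [hrest, hvsum, hNsplit, Multiset.sum_add]
      have h5 : N₁.sum = Multiset.card N₁ * w k := by
        rw [hN₁eq, Multiset.sum_replicate, smul_eq_mul]
        simp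
      have h6 : Multiset.card N₁ * w k = w k * Multiset.card N₁ := Nat.mul_comm _ _
      omega

/-- Main representability lemma: if `u i + 1` dominates every other weight and
`w·u ≥ 2 d`, then `d` is representable below `u`. -/
lemma repr_lcm {n : ℕ} (w u : Fin n → ℕ) (hw : ∀ k, 0 < w k) (i : Fin n)
    (hbig : ∀ k, k ≠ i → w k ≤ u i + 1) (hS : 2 * lcmW w ≤ dotW w u) :
    ∃ v : Fin n → ℕ, (∀ k, v k ≤ u k) ∧ dotW w v = lcmW w := by
  set d := lcmW w with hd
  have hdvd : ∀ k, w k ∣ d := fun k => Finset.dvd_lcm (Finset.mem_univ k)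
  have hs : 0 < w i := hw i
  rcases le_or_gt d ((w i) * (u i)) with hcase | hcase
  · -- enough i-coins alone
    refine ⟨fun k => if k = i then d / (w i) else 0, ?_, ?_⟩
    · intro k
      by_cases hk : k = i
      · subst hk
        simp only [if_pos rfl]
        have h1 : d / (w k) ≤ ((w k) * (u k)) / (w k) := Nat.div_le_div_right hcase
        rwa [Nat.mul_div_cancel_left (u k) hs] at h1
      · simp [hk]
    · rw [dotW, Finset.sum_eq_single i]
      · rw [if_pos rfl]
        exact Nat.mul_div_cancel' (hdvd i) 
      · intro b _ hb
        simp [hb]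
      · intro h
        exact absurd (Finset.mem_univ i) h
  · -- general case
    have hsq1 : (w i) * ((u i) + 1) ≤ d := by
      obtain ⟨m, hm⟩ := hdvd i
      have hqm : (u i) + 1 ≤ m := by
        by_contra hcon
        push_neg at hcon
        have h3 : m ≤ (u i) := by omega
        have h4 := Nat.mul_le_mul_left (w i) h3
        omega
      calc (w i) * ((u i) + 1) ≤ (w i) * m := Nat.mul_le_mul_left (w i) hqm
        _ = d := hm.symm
    set T : Multiset ℕ := ∑ k ∈ Finset.univ.erase i, Multiset.replicate (u k) (w k) with hT
    have hTsum : T.sum = ∑ k ∈ Finset.univ.erase i, w k * u k := by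
      rw [hT]
      rw [Multiset.sum_sum]
      apply Finset.sum_congr rfl
      intro k _
      rw [Multiset.sum_replicate, smul_eq_mul, Nat.mul_comm]
    have hdot : T.sum + (w i) * (u i) = dotW w u := by
      rw [hTsum, dotW]
      rw [← Finset.sum_erase_add Finset.univ _ (Finset.mem_univ i)]
    have hmem : ∀ c ∈ T, 0 < c ∧ c ≤ (u i) + 1 := by
      intro c hc
      rw [hT, Multiset.mem_sum] at hc
      obtain ⟨k, hkF, hkc⟩ := hc
      have hck : c = w k := Multiset.eq_of_mem_replicate hkc
      have hki : k ≠ i := Finset.ne_of_mem_erase hkF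
      exact ⟨hck ▸ hw k, hck ▸ hbig k hki⟩
    have hsD : (w i) * (d / (w i)) = d := Nat.mul_div_cancel' (hdvd i)
    have hineq : (w i) * (d / (w i)) + (w i) * ((u i) + 1) ≤ T.sum + (w i) * (u i) + ((u i) + 1) := by
      rw [hsD]
      omega
    obtain ⟨N, hNT, a, ha, hNsum⟩ :=
      core (w i) (u i) hs (Multiset.card T) T (le_refl _) hmem (d / (w i)) hineq
    rw [hsD] at hNsum
    obtain ⟨v, hv, hvsum⟩ := unpack w u (Finset.univ.erase i) N hNT
    refine ⟨Function.update v i a, ?_, ?_⟩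
    · intro k
      by_cases hk : k = i
      · subst hk; simpa using ha
      · simpa [Function.update_of_ne hk] using hv k
    · rw [dotW, ← Finset.sum_erase_add Finset.univ _ (Finset.mem_univ i)]
      rw [Function.update_self]
      have hrest : ∑ k ∈ Finset.univ.erase i, w k * Function.update v i a k
          = ∑ k ∈ Finset.univ.erase i, w k * v k := by
        apply Finset.sum_congr rfl
        intro k hkmem
        rw [Function.update_of_ne (Finset.ne_of_mem_erase hkmem)]
      rw [hrest, hvsum]
      omega

theorem bubble_coord_le_of_monotone {n : ℕ} (hn : 2 ≤ n) (w : Fin n → ℕ)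
    (hw : ∀ i, 0 < w i) (hmono : Monotone w) (u : Fin n → ℕ) (hu : IsBubble w u) :
    (∀ i : Fin n, (i : ℕ) < n - 1 → (u i : ℤ) ≤ (w ⟨n - 1, by omega⟩ : ℤ) - 2) ∧
      (u ⟨n - 1, by omega⟩ : ℤ) ≤ (w ⟨n - 2, by omega⟩ : ℤ) - 2 := by
  obtain ⟨h2d, hno⟩ := hu
  constructor
  · intro i hi
    by_contra hcon
    push_neg at hcon
    have hni : w ⟨n - 1, by omega⟩ ≤ u i + 1 := by
      omega
    apply hno
    apply repr_lcm w u hw i ?_ h2d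
    intro k _
    calc w k ≤ w ⟨n - 1, by omega⟩ := hmono (by
            simp only [Fin.le_def]
            omega)
      _ ≤ u i + 1 := hni
  · by_contra hcon
    push_neg at hcon
    have hni : w ⟨n - 2, by omega⟩ ≤ u ⟨n - 1, by omega⟩ + 1 := by
      omega
    apply hno
    apply repr_lcm w u hw ⟨n - 1, by omega⟩ ?_ h2d
    intro k hk
    have hkval : (k : ℕ) ≤ n - 2 := by
      have h1 : (k : ℕ) < n := k.isLt
      have h2 : (k : ℕ) ≠ n - 1 := fun h => hk (Fin.ext h)
      omega
    calc w k ≤ w ⟨n - 2, by omega⟩ := hmono (by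
            simp only [Fin.le_def]
            omega)
      _ ≤ u ⟨n - 1, by omega⟩ + 1 := hni
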